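/- Let P1, P2, P3 be paths on the triangular grid, each with exactly one bend, that pairwise share at least one grid edge. Suppose that E(P1) ∩ E(P2) and E(P1) ∩ E(P3) are both contained in the edge set of one and the same segment of P1, and that (E(P1) ∩ E(P2)) ∩ (E(P1) ∩ E(P3)) = ∅. Then P2 and P3 have the same bend point, and there is a grid point common to P1, P2 and P3 (so the three paths form a claw-clique). -/

import Mathlib

/-- The triangular grid: the simple graph on `ℤ × ℤ` where two points are adjacent
iff their difference is `±(1,0)`, `±(0,1)` or `±(1,1)`. -/
def TGrid : SimpleGraph (ℤ × ℤ) where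
  Adj u v :=
    (v.1 - u.1 = 1 ∧ v.2 - u.2 = 0) ∨ (v.1 - u.1 = -1 ∧ v.2 - u.2 = 0) ∨
    (v.1 - u.1 = 0 ∧ v.2 - u.2 = 1) ∨ (v.1 - u.1 = 0 ∧ v.2 - u.2 = -1) ∨
    (v.1 - u.1 = 1 ∧ v.2 - u.2 = 1) ∨ (v.1 - u.1 = -1 ∧ v.2 - u.2 = -1)
  symm := ⟨by intro u v h; omega⟩
  loopless := ⟨by intro u h; omega⟩

/-- The (symmetric) direction datum of a grid edge: the pair of absolute coordinate
differences.  For grid edges this is `(1,0)` (horizontal), `(0,1)` (vertical) or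
`(1,1)` (diagonal). -/
def edir (e : Sym2 (ℤ × ℤ)) : ℤ × ℤ :=
  Sym2.lift ⟨fun u v => (|u.1 - v.1|, |u.2 - v.2|), by
    intro u v; simp [abs_sub_comm]⟩ e

/-- The `t`-th edge of a walk. -/
def wEdge {u v : ℤ × ℤ} (p : TGrid.Walk u v) (t : ℕ) : Sym2 (ℤ × ℤ) :=
  s(p.getVert t, p.getVert (t + 1))

/-- The number of bends of a walk: the number of consecutive pairs of edges with
different directions. -/
def bendCount {u v : ℤ × ℤ} (p : TGrid.Walk u v) : ℕ :=
  (List.range (p.length - 1)).countP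
    (fun i => decide (edir (wEdge p i) ≠ edir (wEdge p (i + 1))))

/-- `b` is a bend point of the walk `p`. -/
def IsBendAt {u v : ℤ × ℤ} (p : TGrid.Walk u v) (b : ℤ × ℤ) : Prop :=
  ∃ i : ℕ, i + 2 ≤ p.length ∧ p.getVert (i + 1) = b ∧
    edir (wEdge p i) ≠ edir (wEdge p (i + 1))

/-- A (nontrivial simple) path on the triangular grid. -/
structure TPath where
  src : ℤ × ℤ
  dst : ℤ × ℤ
  walk : TGrid.Walk src dst
  isPath : walk.IsPath
  nontriv : 0 < walk.length

/-- The set of grid edges of a path. -/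
def pEdges (P : TPath) : Set (Sym2 (ℤ × ℤ)) := {e | e ∈ P.walk.edges}

/-- The set of grid points of a path. -/
def pPts (P : TPath) : Set (ℤ × ℤ) := {q | q ∈ P.walk.support}

/-- A segment of a path: a maximal straight (bend-free) subpath, recorded by the
interval of edge indices `[i, j)` it occupies. -/
structure Segment (P : TPath) where
  i : ℕ
  j : ℕ
  lt : i < j
  le : j ≤ P.walk.length
  straight : ∀ t, i ≤ t → t < j → edir (wEdge P.walk t) = edir (wEdge P.walk i)
  maxLeft : i = 0 ∨ edir (wEdge P.walk (i - 1)) ≠ edir (wEdge P.walk i)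
  maxRight : j = P.walk.length ∨ edir (wEdge P.walk (j - 1)) ≠ edir (wEdge P.walk j)

/-- The set of grid edges of a segment. -/
def Segment.edges {P : TPath} (s : Segment P) : Set (Sym2 (ℤ × ℤ)) :=
  {e | ∃ t, s.i ≤ t ∧ t < s.j ∧ e = wEdge P.walk t}

/-- The set of grid points of a segment. -/
def Segment.pts {P : TPath} (s : Segment P) : Set (ℤ × ℤ) :=
  {q | ∃ t, s.i ≤ t ∧ t ≤ s.j ∧ q = P.walk.getVert t}

/-- The direction of a segment. -/
def Segment.dir {P : TPath} (s : Segment P) : ℤ × ℤ := edir (wEdge P.walk s.i)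

/-- The three directions of the triangular grid. -/
inductive Dir | H | V | D
deriving DecidableEq

/-- The direction of the (straight) line from `a` to `b`. -/
def dirOf (a b : ℤ × ℤ) : Dir :=
  if a.2 = b.2 then .H else if a.1 = b.1 then .V else .D

/-- A grid line of the triangular grid: a full horizontal, vertical or diagonal line. -/
structure GridLine where
  dir : Dir
  c : ℤ

/-- The parametrization of the points of a grid line. -/
def GridLine.pt (l : GridLine) (t : ℤ) : ℤ × ℤ :=
  match l.dir with
  | .H => (t, l.c)
  | .V => (l.c, t)
  | .D => (l.c + t, t)

/-- The `t`-th edge of a grid line. -/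
def GridLine.edge (l : GridLine) (t : ℤ) : Sym2 (ℤ × ℤ) := s(l.pt t, l.pt (t + 1))

/-- The set of grid points of a grid line. -/
def GridLine.pts (l : GridLine) : Set (ℤ × ℤ) := Set.range l.pt

/-- The set of grid edges of a grid line. -/
def GridLine.edges (l : GridLine) : Set (Sym2 (ℤ × ℤ)) := Set.range l.edge

/-- A right triangle of the triangular grid, given by a base corner `p`, a leg
length `k ≥ 1`, and one of the two possible orientations. -/
structure RightTri where
  p : ℤ × ℤ
  k : ℤ
  hk : 1 ≤ k
  orientA : Bool

/-- The set of grid edges of a right triangle. -/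
def RightTri.edges (T : RightTri) : Set (Sym2 (ℤ × ℤ)) :=
  if T.orientA then
    {e | ∃ t : ℤ, 0 ≤ t ∧ t < T.k ∧
      (e = s((T.p.1 + t, T.p.2), (T.p.1 + t + 1, T.p.2)) ∨
       e = s((T.p.1 + T.k, T.p.2 + t), (T.p.1 + T.k, T.p.2 + t + 1)) ∨
       e = s((T.p.1 + t, T.p.2 + t), (T.p.1 + t + 1, T.p.2 + t + 1)))}
  else
    {e | ∃ t : ℤ, 0 ≤ t ∧ t < T.k ∧
      (e = s((T.p.1, T.p.2 + t), (T.p.1, T.p.2 + t + 1)) ∨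
       e = s((T.p.1 + t, T.p.2 + T.k), (T.p.1 + t + 1, T.p.2 + T.k)) ∨
       e = s((T.p.1 + t, T.p.2 + t), (T.p.1 + t + 1, T.p.2 + t + 1)))}

/-- The three corners of a right triangle. -/
def RightTri.corners (T : RightTri) : Set (ℤ × ℤ) :=
  if T.orientA then {T.p, (T.p.1 + T.k, T.p.2), (T.p.1 + T.k, T.p.2 + T.k)}
  else {T.p, (T.p.1, T.p.2 + T.k), (T.p.1 + T.k, T.p.2 + T.k)}

/-- `U(𝒫)`: the subgraph of the grid formed by all segments of members of the family
that share at least one grid edge with another member, given by its set of edges. -/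
def UEdges {ι : Type} (P : ι → TPath) : Set (Sym2 (ℤ × ℤ)) :=
  {e | ∃ i : ι, ∃ s : Segment (P i), e ∈ s.edges ∧
        ∃ j : ι, j ≠ i ∧ (s.edges ∩ pEdges (P j)).Nonempty}

/-- A B₁-EPGₜ representation of a simple graph `G`: a family of at most-one-bend
paths on the triangular grid whose edge-intersection graph is `G`. -/
def IsB1EPGtRep {V : Type} (G : SimpleGraph V) (Rep : V → TPath) : Prop :=
  (∀ v, bendCount (Rep v).walk ≤ 1) ∧
  ∀ u v : V, u ≠ v → (G.Adj u v ↔ (pEdges (Rep u) ∩ pEdges (Rep v)).Nonempty)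

/-! ### Auxiliary machinery for the proof of Statement 11 -/

section Stmt11Aux

open SimpleGraph Walk

/-- The six unit steps of the triangular grid, componentwise. -/
def Step (x y : ℤ) : Prop :=
  (x=1∧y=0)∨(x=-1∧y=0)∨(x=0∧y=1)∨(x=0∧y=-1)∨(x=1∧y=1)∨(x=-1∧y=-1)

/-- Point at parameter `m` on the line through `c` with direction `d`. -/
def pv (c d : ℤ × ℤ) (m : ℤ) : ℤ × ℤ := (c.1 + m * d.1, c.2 + m * d.2)

/-- The `m`-th edge of the line through `c` with direction `d`. -/
def lE (c d : ℤ × ℤ) (m : ℤ) : Sym2 (ℤ × ℤ) := s(pv c d m, pv c d (m+1))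

lemma adj_iff (u v : ℤ×ℤ) : TGrid.Adj u v ↔ Step (v.1-u.1) (v.2-u.2) := Iff.rfl

lemma edir_mk (a b : ℤ×ℤ) : edir s(a,b) = (|a.1 - b.1|, |a.2 - b.2|) := rfl

lemma sym2_eq {a b a' b' : ℤ×ℤ} :
    s(a,b) = s(a',b') ↔ (a'=a ∧ b'=b) ∨ (a'=b ∧ b'=a) := by
  rw [Sym2.eq_iff]; tauto

lemma np {u1 u2 d1 d2 μ l : ℤ} (hu : Step u1 u2) (hd : Step d1 d2)
    (hne : ¬(|u1| = |d1| ∧ |u2| = |d2|)) (h1 : μ*u1 = l*d1) (h2 : μ*u2 = l*d2) :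
    μ = 0 ∧ l = 0 := by
  rcases hu with ⟨rfl,rfl⟩|⟨rfl,rfl⟩|⟨rfl,rfl⟩|⟨rfl,rfl⟩|⟨rfl,rfl⟩|⟨rfl,rfl⟩ <;>
  rcases hd with ⟨rfl,rfl⟩|⟨rfl,rfl⟩|⟨rfl,rfl⟩|⟨rfl,rfl⟩|⟨rfl,rfl⟩|⟨rfl,rfl⟩ <;>
  norm_num at hne <;> omega

lemma keystep {x1 y1 x2 y2 : ℤ} (h1 : Step x1 y1) (h2 : Step x2 y2)
    (habs : |x1| = |x2| ∧ |y1| = |y2|) (hne : x1 + x2 ≠ 0 ∨ y1 + y2 ≠ 0) :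
    x1 = x2 ∧ y1 = y2 := by
  rcases h1 with ⟨rfl,rfl⟩|⟨rfl,rfl⟩|⟨rfl,rfl⟩|⟨rfl,rfl⟩|⟨rfl,rfl⟩|⟨rfl,rfl⟩ <;>
  rcases h2 with ⟨rfl,rfl⟩|⟨rfl,rfl⟩|⟨rfl,rfl⟩|⟨rfl,rfl⟩|⟨rfl,rfl⟩|⟨rfl,rfl⟩ <;>
  norm_num at habs <;> omega

lemma step_nonzero {x y : ℤ} (h : Step x y) : x ≠ 0 ∨ y ≠ 0 := by
  rcases h with ⟨rfl,rfl⟩|⟨rfl,rfl⟩|⟨rfl,rfl⟩|⟨rfl,rfl⟩|⟨rfl,rfl⟩|⟨rfl,rfl⟩ <;> omega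

lemma getVert_inj {u v : ℤ×ℤ} (p : TGrid.Walk u v) (hp : p.IsPath) :
    ∀ i j, i ≤ p.length → j ≤ p.length → p.getVert i = p.getVert j → i = j := by
  induction p with
  | nil => intro i j hi hj _; simp [SimpleGraph.Walk.length_nil] at hi hj; omega
  | @cons a b c h q ih =>
    rw [SimpleGraph.Walk.cons_isPath_iff] at hp
    intro i j hi hj hij
    match i, j with
    | 0, 0 => rfl
    | 0, (j+1) =>
      exfalso
      apply hp.2
      rw [SimpleGraph.Walk.mem_support_iff_exists_getVert]
      exact ⟨j, by simpa [SimpleGraph.Walk.getVert_cons_succ] using hij.symm, by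
        simpa [SimpleGraph.Walk.length_cons] using hj⟩
    | (i+1), 0 =>
      exfalso
      apply hp.2
      rw [SimpleGraph.Walk.mem_support_iff_exists_getVert]
      exact ⟨i, by simpa [SimpleGraph.Walk.getVert_cons_succ] using hij, by
        simpa [SimpleGraph.Walk.length_cons] using hi⟩
    | (i+1), (j+1) =>
      have := ih hp.1 i j (by simpa [SimpleGraph.Walk.length_cons] using hi)
        (by simpa [SimpleGraph.Walk.length_cons] using hj)
        (by simpa [SimpleGraph.Walk.getVert_cons_succ] using hij)
      omega

lemma mem_edges_iff {u v : ℤ×ℤ} (p : TGrid.Walk u v) (e : Sym2 (ℤ×ℤ)) :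
    e ∈ p.edges ↔ ∃ t, t < p.length ∧ e = s(p.getVert t, p.getVert (t+1)) := by
  induction p with
  | nil => simp
  | @cons a b c h q ih =>
    simp only [SimpleGraph.Walk.edges_cons, List.mem_cons, ih,
      SimpleGraph.Walk.length_cons]
    constructor
    · rintro (rfl | ⟨t, ht, rfl⟩)
      · exact ⟨0, by omega, by simp [SimpleGraph.Walk.getVert_cons_succ]⟩
      · exact ⟨t+1, by omega, by simp [SimpleGraph.Walk.getVert_cons_succ]⟩
    · rintro ⟨t, ht, rfl⟩
      match t with
      | 0 => left; simp [SimpleGraph.Walk.getVert_cons_succ]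
      | (t+1) => right; exact ⟨t, by omega, by simp [SimpleGraph.Walk.getVert_cons_succ]⟩

lemma wEdge_mem {u v : ℤ×ℤ} (p : TGrid.Walk u v) {t : ℕ} (ht : t < p.length) :
    wEdge p t ∈ p.edges :=
  (mem_edges_iff p _).mpr ⟨t, ht, rfl⟩

lemma edir_pv (c d : ℤ×ℤ) (m m' : ℤ) (h : m' = m + 1) :
    edir s(pv c d m, pv c d m') = (|d.1|, |d.2|) := by
  subst h
  rw [edir_mk]
  have h1 : (pv c d m).1 - (pv c d (m+1)).1 = -d.1 := by simp [pv]; ring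
  have h2 : (pv c d m).2 - (pv c d (m+1)).2 = -d.2 := by simp [pv]; ring
  rw [h1, h2, abs_neg, abs_neg]

lemma edir_lE (c d : ℤ×ℤ) (m : ℤ) : edir (lE c d m) = (|d.1|, |d.2|) :=
  edir_pv c d m (m+1) rfl

lemma pv_inj {c d : ℤ×ℤ} (hd : Step d.1 d.2) {m m' : ℤ}
    (h : pv c d m = pv c d m') : m = m' := by
  have h1 := congrArg Prod.fst h
  have h2 := congrArg Prod.snd h
  simp only [pv] at h1 h2
  rcases hd with ⟨e1,e2⟩|⟨e1,e2⟩|⟨e1,e2⟩|⟨e1,e2⟩|⟨e1,e2⟩|⟨e1,e2⟩ <;>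
    (rw [e1] at h1; rw [e2] at h2; omega)

lemma lE_inj {c d : ℤ×ℤ} (hd : Step d.1 d.2) {m m' : ℤ}
    (h : lE c d m = lE c d m') : m = m' := by
  rcases sym2_eq.mp h with ⟨h1, _⟩ | ⟨h1, h2⟩
  · exact (pv_inj hd h1.symm)
  · have := pv_inj hd h1.symm
    have := pv_inj hd h2.symm
    omega

lemma step_const {u v : ℤ×ℤ} (p : TGrid.Walk u v) (hp : p.IsPath) (i j : ℕ)
    (hj : j ≤ p.length)
    (hconst : ∀ t, i ≤ t → t < j → edir (wEdge p t) = edir (wEdge p i)) :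
    ∀ t, i ≤ t → t < j →
      (p.getVert (t+1)).1 - (p.getVert t).1 = (p.getVert (i+1)).1 - (p.getVert i).1 ∧
      (p.getVert (t+1)).2 - (p.getVert t).2 = (p.getVert (i+1)).2 - (p.getVert i).2 := by
  intro t ht
  induction t, ht using Nat.le_induction with
  | base => intro _; exact ⟨rfl, rfl⟩
  | succ n hn ih =>
    intro hlt
    have ihn := ih (by omega)
    have h1 : edir (wEdge p n) = edir (wEdge p (n+1)) := by
      rw [hconst n hn (by omega), hconst (n+1) (by omega) hlt]
    have hs1 : Step ((p.getVert (n+1)).1 - (p.getVert n).1)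
        ((p.getVert (n+1)).2 - (p.getVert n).2) :=
      (adj_iff _ _).mp (p.adj_getVert_succ (by omega))
    have hs2 : Step ((p.getVert (n+1+1)).1 - (p.getVert (n+1)).1)
        ((p.getVert (n+1+1)).2 - (p.getVert (n+1)).2) :=
      (adj_iff _ _).mp (p.adj_getVert_succ (by omega))
    have hne : p.getVert n ≠ p.getVert (n+1+1) := by
      intro hcon
      have := getVert_inj p hp n (n+1+1) (by omega) (by omega) hcon
      omega
    simp only [wEdge, edir_mk, Prod.mk.injEq] at h1
    have habs : |(p.getVert (n+1)).1 - (p.getVert n).1| =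
          |(p.getVert (n+1+1)).1 - (p.getVert (n+1)).1| ∧
        |(p.getVert (n+1)).2 - (p.getVert n).2| =
          |(p.getVert (n+1+1)).2 - (p.getVert (n+1)).2| := by
      constructor
      · rw [abs_sub_comm, h1.1, abs_sub_comm]
      · rw [abs_sub_comm, h1.2, abs_sub_comm]
    have hsum : (p.getVert (n+1)).1 - (p.getVert n).1 +
          ((p.getVert (n+1+1)).1 - (p.getVert (n+1)).1) ≠ 0 ∨
        (p.getVert (n+1)).2 - (p.getVert n).2 +
          ((p.getVert (n+1+1)).2 - (p.getVert (n+1)).2) ≠ 0 := by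
      by_contra hcon
      push_neg at hcon
      exact hne (Prod.ext (by omega) (by omega))
    have hkey := keystep hs1 hs2 habs hsum
    constructor <;> omega

lemma straight_affine {u v : ℤ×ℤ} (p : TGrid.Walk u v) (hp : p.IsPath) (i j : ℕ)
    (hj : j ≤ p.length)
    (hconst : ∀ t, i ≤ t → t < j → edir (wEdge p t) = edir (wEdge p i)) :
    ∀ t, i ≤ t → t ≤ j → p.getVert t =
      pv (p.getVert i) ((p.getVert (i+1)).1 - (p.getVert i).1,
        (p.getVert (i+1)).2 - (p.getVert i).2) ((t:ℤ) - (i:ℤ)) := by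
  intro t ht
  induction t, ht using Nat.le_induction with
  | base => intro _; apply Prod.ext <;> simp [pv]
  | succ n hn ih =>
    intro hle
    have ihn := ih (by omega)
    have hstep := step_const p hp i j hj hconst n hn (by omega)
    have h1 := congrArg Prod.fst ihn
    have h2 := congrArg Prod.snd ihn
    simp only [pv] at h1 h2
    apply Prod.ext <;> simp only [pv] <;> push_cast at h1 h2 ⊢
    · linear_combination h1 + hstep.1
    · linear_combination h2 + hstep.2

lemma two_mem {α} {l : List α} {a b : α} (ha : a ∈ l) (hb : b ∈ l) (hab : a ≠ b) :
    2 ≤ l.length := by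
  induction l with
  | nil => simp at ha
  | cons c t ih =>
    rcases List.mem_cons.mp ha with rfl | ha'
    · rcases List.mem_cons.mp hb with rfl | hb'
      · exact absurd rfl hab
      · have := List.length_pos_of_mem hb'
        simp only [List.length_cons]; omega
    · have := List.length_pos_of_mem ha'
      simp only [List.length_cons]; omega

lemma pv_congr (c d : ℤ×ℤ) {m m' : ℤ} (h : m = m') : pv c d m = pv c d m' := by rw [h]

lemma rep {u v : ℤ×ℤ} (p : TGrid.Walk u v) (hp : p.IsPath) (hb : bendCount p = 1) :
    ∃ (k : ℕ) (dv dw : ℤ×ℤ),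
      k + 2 ≤ p.length ∧ Step dv.1 dv.2 ∧ Step dw.1 dw.2 ∧
      edir (wEdge p k) ≠ edir (wEdge p (k+1)) ∧
      ¬(|dv.1| = |dw.1| ∧ |dv.2| = |dw.2|) ∧
      (∀ t : ℕ, t ≤ k + 1 → p.getVert t = pv (p.getVert 0) dv (t:ℤ)) ∧
      (∀ t : ℕ, k+1 ≤ t → t ≤ p.length →
        p.getVert t = pv (p.getVert (k+1)) dw ((t:ℤ) - ((k:ℤ)+1))) := by
  rw [bendCount] at hb
  have hpos : 0 < (List.range (p.length - 1)).countP
      (fun i => decide (edir (wEdge p i) ≠ edir (wEdge p (i + 1)))) := by omega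
  obtain ⟨k, hkmem, hkQ⟩ := List.countP_pos_iff.mp hpos
  have hk : k < p.length - 1 := List.mem_range.mp hkmem
  have hkne : edir (wEdge p k) ≠ edir (wEdge p (k+1)) := of_decide_eq_true hkQ
  have huniq : ∀ i, i < p.length - 1 → i ≠ k →
      edir (wEdge p i) = edir (wEdge p (i+1)) := by
    intro i hi hik
    by_contra hQ
    have hi' : i ∈ (List.range (p.length - 1)).filter
        (fun i => decide (edir (wEdge p i) ≠ edir (wEdge p (i + 1)))) :=
      List.mem_filter.mpr ⟨List.mem_range.mpr hi, by simpa using hQ⟩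
    have hk' : k ∈ (List.range (p.length - 1)).filter
        (fun i => decide (edir (wEdge p i) ≠ edir (wEdge p (i + 1)))) :=
      List.mem_filter.mpr ⟨hkmem, hkQ⟩
    have h2 := two_mem hi' hk' hik
    rw [List.countP_eq_length_filter] at hb
    omega
  have run1 : ∀ t, t ≤ k → edir (wEdge p t) = edir (wEdge p 0) := by
    intro t
    induction t with
    | zero => intro _; rfl
    | succ n ih =>
      intro h
      rw [← huniq n (by omega) (by omega)]
      exact ih (by omega)
  have run2 : ∀ t, k+1 ≤ t → t < p.length → edir (wEdge p t) = edir (wEdge p (k+1)) := by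
    intro t ht
    induction t, ht using Nat.le_induction with
    | base => intro _; rfl
    | succ n hn ih =>
      intro h
      rw [← huniq n (by omega) (by omega)]
      exact ih (by omega)
  set dv : ℤ×ℤ := ((p.getVert (0+1)).1 - (p.getVert 0).1,
      (p.getVert (0+1)).2 - (p.getVert 0).2) with hdv
  set dw : ℤ×ℤ := ((p.getVert (k+1+1)).1 - (p.getVert (k+1)).1,
      (p.getVert (k+1+1)).2 - (p.getVert (k+1)).2) with hdw
  have aff1 : ∀ t : ℕ, t ≤ k + 1 → p.getVert t = pv (p.getVert 0) dv (t:ℤ) := by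
    intro t ht
    have h := straight_affine p hp 0 (k+1) (by omega)
      (fun t' _ h' => run1 t' (by omega)) t (by omega) ht
    rw [h, hdv]
    exact pv_congr _ _ (by push_cast; ring)
  have aff2 : ∀ t : ℕ, k+1 ≤ t → t ≤ p.length →
      p.getVert t = pv (p.getVert (k+1)) dw ((t:ℤ) - ((k:ℤ)+1)) := by
    intro t ht ht'
    have h := straight_affine p hp (k+1) p.length (le_refl _)
      (fun t' h1 h2 => run2 t' h1 h2) t ht ht'
    rw [h, hdw]
    exact pv_congr _ _ (by push_cast; ring)
  have hsv : Step dv.1 dv.2 := by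
    rw [hdv]; exact (adj_iff _ _).mp (p.adj_getVert_succ (by omega))
  have hsw : Step dw.1 dw.2 := by
    rw [hdw]; exact (adj_iff _ _).mp (p.adj_getVert_succ (by omega))
  have hex : edir (wEdge p k) = (|dv.1|, |dv.2|) := by
    have e1 := aff1 k (by omega)
    have e2 := aff1 (k+1) (by omega)
    show edir s(p.getVert k, p.getVert (k+1)) = _
    rw [e1, e2, hdv]
    exact edir_pv _ _ _ _ (by push_cast; ring)
  have hey : edir (wEdge p (k+1)) = (|dw.1|, |dw.2|) := by
    have e1 := aff2 (k+1) (le_refl _) (by omega)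
    have e2 := aff2 (k+1+1) (by omega) (by omega)
    show edir s(p.getVert (k+1), p.getVert (k+1+1)) = _
    rw [e1, e2, hdw]
    exact edir_pv _ _ _ _ (by push_cast; ring)
  refine ⟨k, dv, dw, by omega, hsv, hsw, hkne, ?_, aff1, aff2⟩
  intro hcon
  apply hkne
  rw [hex, hey, hcon.1, hcon.2]

lemma step_neg {x y : ℤ} (h : Step x y) : Step (-x) (-y) := by
  rcases h with ⟨rfl,rfl⟩|⟨rfl,rfl⟩|⟨rfl,rfl⟩|⟨rfl,rfl⟩|⟨rfl,rfl⟩|⟨rfl,rfl⟩ <;>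
    simp [Step]

lemma lE_eq (c d : ℤ×ℤ) {m x y : ℤ} (hx : x = m) (hy : y = m + 1) :
    s(pv c d x, pv c d y) = lE c d m := by rw [hx, hy]; rfl

lemma lE_eq' (c d : ℤ×ℤ) {m x y : ℤ} (hx : x = m + 1) (hy : y = m) :
    s(pv c d x, pv c d y) = lE c d m := by rw [hx, hy, Sym2.eq_swap]; rfl

lemma run_edges (c d Q dv : ℤ×ℤ) (K : ℤ)
    (hshare : ∃ t m : ℤ, 0 ≤ t ∧ t < K ∧
      s(pv Q dv t, pv Q dv (t+1)) = lE c d m) :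
    ∃ a b : ℤ, b - a = K ∧
      (|dv.1| = |d.1| ∧ |dv.2| = |d.2|) ∧
      (∀ t, 0 ≤ t → t < K → ∃ m, a ≤ m ∧ m < b ∧
        s(pv Q dv t, pv Q dv (t+1)) = lE c d m) ∧
      (∀ m, a ≤ m → m < b → ∃ t, 0 ≤ t ∧ t < K ∧
        lE c d m = s(pv Q dv t, pv Q dv (t+1))) ∧
      ((Q = pv c d a ∧ pv Q dv K = pv c d b) ∨
       (Q = pv c d b ∧ pv Q dv K = pv c d a)) := by
  obtain ⟨t0, m0, ht0, ht0K, hE⟩ := hshare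
  rcases sym2_eq.mp hE.symm with ⟨h1, h2⟩ | ⟨h1, h2⟩
  · -- pv Q dv t0 = pv c d m0, pv Q dv (t0+1) = pv c d (m0+1)
    have c11 := congrArg Prod.fst h1.symm; have c12 := congrArg Prod.snd h1.symm
    have c21 := congrArg Prod.fst h2.symm; have c22 := congrArg Prod.snd h2.symm
    simp only [pv] at c11 c12 c21 c22
    have hd1 : dv.1 = d.1 := by linear_combination c11 - c21
    have hd2 : dv.2 = d.2 := by linear_combination c12 - c22
    have hQ1 : Q.1 = c.1 + (m0 - t0) * d.1 := by linear_combination -c11 - t0 * hd1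
    have hQ2 : Q.2 = c.2 + (m0 - t0) * d.2 := by linear_combination -c12 - t0 * hd2
    set a := m0 - t0 with ha
    have key : ∀ z : ℤ, pv Q dv z = pv c d (a + z) := by
      intro z
      apply Prod.ext <;> simp only [pv]
      · linear_combination hQ1 + z * hd1
      · linear_combination hQ2 + z * hd2
    refine ⟨a, a + K, by ring, ⟨by rw [hd1], by rw [hd2]⟩, ?_, ?_, ?_⟩
    · intro t h0 hK'
      refine ⟨a + t, by omega, by omega, ?_⟩
      rw [key t, key (t+1)]
      exact lE_eq c d rfl (by ring)
    · intro m hm hmb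
      refine ⟨m - a, by omega, by omega, ?_⟩
      rw [key (m-a), key (m-a+1)]
      exact (lE_eq c d (by ring) (by ring)).symm
    · left
      constructor
      · apply Prod.ext <;> simp only [pv]
        · exact hQ1
        · exact hQ2
      · rw [key K]
    -- reversed orientation
  · -- pv Q dv t0 = pv c d (m0+1), pv Q dv (t0+1) = pv c d m0
    have c11 := congrArg Prod.fst h1.symm; have c12 := congrArg Prod.snd h1.symm
    have c21 := congrArg Prod.fst h2.symm; have c22 := congrArg Prod.snd h2.symm
    simp only [pv] at c11 c12 c21 c22
    -- c11 : Q.1 + t0*dv.1 = c.1 + (m0+1)*d.1 ;  c21 : Q.1 + (t0+1)*dv.1 = c.1 + m0*d.1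
    have hd1 : dv.1 = -d.1 := by linear_combination c11 - c21
    have hd2 : dv.2 = -d.2 := by linear_combination c12 - c22
    have hQ1 : Q.1 = c.1 + (m0 + t0 + 1) * d.1 := by linear_combination -c11 - t0 * hd1
    have hQ2 : Q.2 = c.2 + (m0 + t0 + 1) * d.2 := by linear_combination -c12 - t0 * hd2
    set b := m0 + t0 + 1 with hb
    have key : ∀ z : ℤ, pv Q dv z = pv c d (b - z) := by
      intro z
      apply Prod.ext <;> simp only [pv]
      · linear_combination hQ1 + z * hd1
      · linear_combination hQ2 + z * hd2
    refine ⟨b - K, b, by ring, ⟨by rw [hd1, abs_neg], by rw [hd2, abs_neg]⟩, ?_, ?_, ?_⟩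
    · intro t h0 hK'
      refine ⟨b - t - 1, by omega, by omega, ?_⟩
      rw [key t, key (t+1)]
      exact lE_eq' c d (by ring) (by ring)
    · intro m hm hmb
      refine ⟨b - 1 - m, by omega, by omega, ?_⟩
      rw [key (b-1-m), key (b-1-m+1)]
      exact (lE_eq' c d (by ring) (by ring)).symm
    · right
      constructor
      · apply Prod.ext <;> simp only [pv]
        · exact hQ1
        · exact hQ2
      · rw [key K]

lemma align (c d : ℤ×ℤ) (hd : Step d.1 d.2) (P : TPath)
    (hb : bendCount P.walk = 1) (m0 : ℤ) (hm0 : lE c d m0 ∈ pEdges P) :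
    ∃ (a b : ℤ) (B w : ℤ×ℤ),
      a ≤ m0 ∧ m0 < b ∧
      (∀ m : ℤ, lE c d m ∈ pEdges P ↔ (a ≤ m ∧ m < b)) ∧
      IsBendAt P.walk B ∧ (B = pv c d a ∨ B = pv c d b) ∧
      Step w.1 w.2 ∧ ¬(|w.1| = |d.1| ∧ |w.2| = |d.2|) ∧
      (∀ e ∈ pEdges P, (∃ m, a ≤ m ∧ m < b ∧ e = lE c d m) ∨
        (∃ t : ℤ, 0 ≤ t ∧ e = lE B w t)) := by
  obtain ⟨k, dv, dw, hk2, hsv, hsw, hkne, hnp, aff1, aff2⟩ := rep P.walk P.isPath hb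
  set p := P.walk with hp
  set g0 := p.getVert 0 with hg0
  set B := p.getVert (k+1) with hB0
  have rE1 : ∀ t : ℕ, t < k+1 → s(p.getVert t, p.getVert (t+1))
      = s(pv g0 dv (t:ℤ), pv g0 dv ((t:ℤ)+1)) := by
    intro t ht
    rw [aff1 t (by omega), aff1 (t+1) (by omega),
      pv_congr g0 dv (show ((t+1:ℕ):ℤ) = (t:ℤ)+1 by push_cast; ring)]
  have rE2 : ∀ t : ℕ, k+1 ≤ t → t < p.length → s(p.getVert t, p.getVert (t+1))
      = s(pv B dw ((t:ℤ)-((k:ℤ)+1)), pv B dw (((t:ℤ)-((k:ℤ)+1))+1)) := by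
    intro t ht ht'
    rw [aff2 t ht (by omega), aff2 (t+1) (by omega) (by omega),
      pv_congr B dw (show ((t+1:ℕ):ℤ)-((k:ℤ)+1) = ((t:ℤ)-((k:ℤ)+1))+1 by push_cast; ring)]
  have hed1 : ∀ t : ℕ, t < k+1 → edir (wEdge p t) = (|dv.1|, |dv.2|) := by
    intro t ht
    show edir s(p.getVert t, p.getVert (t+1)) = _
    rw [rE1 t ht]; exact edir_pv _ _ _ _ rfl
  have hed2 : ∀ t : ℕ, k+1 ≤ t → t < p.length → edir (wEdge p t) = (|dw.1|, |dw.2|) := by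
    intro t ht ht'
    show edir s(p.getVert t, p.getVert (t+1)) = _
    rw [rE2 t ht ht']; exact edir_pv _ _ _ _ rfl
  have hbend : IsBendAt p B := ⟨k, hk2, rfl, hkne⟩
  obtain ⟨t0, ht0, hEq⟩ := (mem_edges_iff p _).mp hm0
  by_cases ht0k : t0 < k + 1
  · -- the first run is the aligned one
    have hsh : ∃ t m : ℤ, 0 ≤ t ∧ t < ((k:ℤ)+1) ∧
        s(pv g0 dv t, pv g0 dv (t+1)) = lE c d m := by
      refine ⟨(t0:ℤ), m0, by omega, by omega, ?_⟩
      rw [← rE1 t0 ht0k]; exact hEq.symm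
    obtain ⟨a, b, hba, habs, fw, bw, hends⟩ := run_edges c d g0 dv ((k:ℤ)+1) hsh
    have hm0ab : a ≤ m0 ∧ m0 < b := by
      obtain ⟨m, hm1, hm2, hme⟩ := fw (t0:ℤ) (by omega) (by omega)
      have : m0 = m := lE_inj hd (by rw [hEq, rE1 t0 ht0k]; exact hme)
      omega
    have hchar : ∀ m : ℤ, lE c d m ∈ pEdges P ↔ (a ≤ m ∧ m < b) := by
      intro m
      constructor
      · intro hmem
        obtain ⟨t, ht, hte⟩ := (mem_edges_iff p _).mp hmem
        by_cases htk : t < k+1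
        · obtain ⟨m', h1, h2, h3⟩ := fw (t:ℤ) (by omega) (by omega)
          have : m = m' := lE_inj hd (by rw [hte, rE1 t htk]; exact h3)
          omega
        · exfalso
          have e2 : (|d.1|, |d.2|) = (|dw.1|, |dw.2|) := by
            rw [← edir_lE c d m, hte]
            exact hed2 t (by omega) ht
          simp only [Prod.mk.injEq] at e2
          exact hnp ⟨habs.1.trans e2.1, habs.2.trans e2.2⟩
      · rintro ⟨hma, hmb⟩
        obtain ⟨t, ht0', htK, hte⟩ := bw m hma hmb
        have htn : t.toNat < k+1 := by omega
        show lE c d m ∈ p.edges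
        have : lE c d m = s(p.getVert t.toNat, p.getVert (t.toNat+1)) := by
          rw [rE1 t.toNat htn, Int.toNat_of_nonneg ht0']
          exact hte
        rw [this]
        exact wEdge_mem p (by omega)
    have hBpt : B = pv c d a ∨ B = pv c d b := by
      have hBv : B = pv g0 dv ((k:ℤ)+1) := by
        rw [hB0, aff1 (k+1) (le_refl _)]
        exact pv_congr _ _ (by push_cast; ring)
      rcases hends with ⟨h1, h2⟩ | ⟨h1, h2⟩
      · right; rw [hBv, h2]
      · left; rw [hBv, h2]
    have hwne : ¬(|dw.1| = |d.1| ∧ |dw.2| = |d.2|) := by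
      rintro ⟨x1, x2⟩
      exact hnp ⟨habs.1.trans x1.symm, habs.2.trans x2.symm⟩
    refine ⟨a, b, B, dw, hm0ab.1, hm0ab.2, hchar, hbend, hBpt, hsw, hwne, ?_⟩
    intro e he
    obtain ⟨t, ht, rfl⟩ := (mem_edges_iff p e).mp he
    by_cases htk : t < k+1
    · left
      obtain ⟨m, h1, h2, h3⟩ := fw (t:ℤ) (by omega) (by omega)
      exact ⟨m, h1, h2, by rw [rE1 t htk]; exact h3⟩
    · right
      refine ⟨(t:ℤ) - ((k:ℤ)+1), by omega, ?_⟩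
      rw [rE2 t (by omega) ht]
      rfl
  · -- the second run is the aligned one
    have hsh : ∃ t m : ℤ, 0 ≤ t ∧ t < ((p.length:ℤ) - ((k:ℤ)+1)) ∧
        s(pv B dw t, pv B dw (t+1)) = lE c d m := by
      refine ⟨(t0:ℤ)-((k:ℤ)+1), m0, by omega, by omega, ?_⟩
      rw [← rE2 t0 (by omega) ht0]; exact hEq.symm
    obtain ⟨a, b, hba, habs, fw, bw, hends⟩ :=
      run_edges c d B dw ((p.length:ℤ) - ((k:ℤ)+1)) hsh
    have hm0ab : a ≤ m0 ∧ m0 < b := by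
      obtain ⟨m, hm1, hm2, hme⟩ := fw ((t0:ℤ)-((k:ℤ)+1)) (by omega) (by omega)
      have : m0 = m := lE_inj hd (by rw [hEq, rE2 t0 (by omega) ht0]; exact hme)
      omega
    have hchar : ∀ m : ℤ, lE c d m ∈ pEdges P ↔ (a ≤ m ∧ m < b) := by
      intro m
      constructor
      · intro hmem
        obtain ⟨t, ht, hte⟩ := (mem_edges_iff p _).mp hmem
        by_cases htk : t < k+1
        · exfalso
          have e2 : (|d.1|, |d.2|) = (|dv.1|, |dv.2|) := by
            rw [← edir_lE c d m, hte]
            exact hed1 t htk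
          simp only [Prod.mk.injEq] at e2
          exact hnp ⟨e2.1.symm.trans habs.1.symm, e2.2.symm.trans habs.2.symm⟩
        · obtain ⟨m', h1, h2, h3⟩ := fw ((t:ℤ)-((k:ℤ)+1)) (by omega) (by omega)
          have : m = m' := lE_inj hd (by rw [hte, rE2 t (by omega) ht]; exact h3)
          omega
      · rintro ⟨hma, hmb⟩
        obtain ⟨t, ht0', htK, hte⟩ := bw m hma hmb
        show lE c d m ∈ p.edges
        have hj : k+1+t.toNat < p.length := by omega
        have : lE c d m = s(p.getVert (k+1+t.toNat), p.getVert (k+1+t.toNat+1)) := by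
          rw [rE2 (k+1+t.toNat) (by omega) hj,
            show ((k+1+t.toNat:ℕ):ℤ)-((k:ℤ)+1) = t by push_cast; omega]
          exact hte
        rw [this]
        exact wEdge_mem p hj
    have hBpt : B = pv c d a ∨ B = pv c d b := by
      rcases hends with ⟨h1, h2⟩ | ⟨h1, h2⟩
      · left; exact h1
      · right; exact h1
    set w : ℤ×ℤ := (-dv.1, -dv.2) with hw
    have hw1 : w.1 = -dv.1 := rfl
    have hw2 : w.2 = -dv.2 := rfl
    have hwstep : Step w.1 w.2 := step_neg hsv
    have hwne : ¬(|w.1| = |d.1| ∧ |w.2| = |d.2|) := by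
      rintro ⟨x1, x2⟩
      rw [hw1, abs_neg] at x1
      rw [hw2, abs_neg] at x2
      exact hnp ⟨x1.trans habs.1.symm, x2.trans habs.2.symm⟩
    have hBg : B = pv g0 dv ((k:ℤ)+1) := by
      rw [hB0, aff1 (k+1) (le_refl _)]
      exact pv_congr _ _ (by push_cast; ring)
    have key2 : ∀ z : ℤ, pv B w z = pv g0 dv ((k:ℤ)+1-z) := by
      intro z
      have hB1 := congrArg Prod.fst hBg
      have hB2 := congrArg Prod.snd hBg
      simp only [pv] at hB1 hB2
      apply Prod.ext <;> simp only [pv, hw1, hw2]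
      · linear_combination hB1
      · linear_combination hB2
    refine ⟨a, b, B, w, hm0ab.1, hm0ab.2, hchar, hbend, hBpt, hwstep, hwne, ?_⟩
    intro e he
    obtain ⟨t, ht, rfl⟩ := (mem_edges_iff p e).mp he
    by_cases htk : t < k+1
    · right
      refine ⟨(k:ℤ) - (t:ℤ), by omega, ?_⟩
      have eA : pv g0 dv ((t:ℤ)) = pv B w ((k:ℤ)-(t:ℤ)+1) := by
        rw [key2 ((k:ℤ)-(t:ℤ)+1)]
        exact pv_congr _ _ (by ring)
      have eB : pv g0 dv ((t:ℤ)+1) = pv B w ((k:ℤ)-(t:ℤ)) := by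
        rw [key2 ((k:ℤ)-(t:ℤ))]
        exact pv_congr _ _ (by ring)
      rw [rE1 t htk, eA, eB]
      exact lE_eq' B w rfl rfl
    · left
      obtain ⟨m, h1, h2, h3⟩ := fw ((t:ℤ)-((k:ℤ)+1)) (by omega) (by omega)
      exact ⟨m, h1, h2, by rw [rE2 t (by omega) ht]; exact h3⟩

lemma bend_pts {P : TPath} {b : ℤ×ℤ} (h : IsBendAt P.walk b) : b ∈ pPts P := by
  obtain ⟨i, hi, heq, _⟩ := h
  show b ∈ P.walk.support
  rw [SimpleGraph.Walk.mem_support_iff_exists_getVert]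
  exact ⟨i+1, heq, by omega⟩

lemma endgame (c d : ℤ×ℤ) (hd : Step d.1 d.2) (β : ℤ)
    (Q2 Q3 : TPath) (a2 b2 a3 b3 : ℤ) (B2 B3 w2 w3 : ℤ×ℤ)
    (hw2 : Step w2.1 w2.2)
    (hne2 : ¬(|w2.1| = |d.1| ∧ |w2.2| = |d.2|))
    (hchar3 : ∀ m : ℤ, lE c d m ∈ pEdges Q3 ↔ (a3 ≤ m ∧ m < b3))
    (hB2 : B2 = pv c d a2 ∨ B2 = pv c d b2)
    (hB3 : B3 = pv c d a3 ∨ B3 = pv c d b3)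
    (hoff2 : ∀ e ∈ pEdges Q2, (∃ m, a2 ≤ m ∧ m < b2 ∧ e = lE c d m) ∨
      (∃ t : ℤ, 0 ≤ t ∧ e = lE B2 w2 t))
    (hoff3 : ∀ e ∈ pEdges Q3, (∃ m, a3 ≤ m ∧ m < b3 ∧ e = lE c d m) ∨
      (∃ t : ℤ, 0 ≤ t ∧ e = lE B3 w3 t))
    (h23 : (pEdges Q2 ∩ pEdges Q3).Nonempty)
    (hE2 : ∃ m, 0 ≤ m ∧ m < β ∧ a2 ≤ m ∧ m < b2)
    (hE3 : ∃ m, 0 ≤ m ∧ m < β ∧ a3 ≤ m ∧ m < b3)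
    (horder : b2 ≤ a3) :
    B2 = B3 ∧ ∃ m : ℤ, 0 ≤ m ∧ m ≤ β ∧ B2 = pv c d m := by
  obtain ⟨m2, hm2⟩ := hE2
  obtain ⟨m3, hm3⟩ := hE3
  obtain ⟨e, he2, he3⟩ := h23
  rcases hoff2 e he2 with ⟨m, hm1, hmb, rfl⟩ | ⟨t, ht, rfl⟩
  · exfalso
    have := (hchar3 m).mp he3
    omega
  rcases hoff3 _ he3 with ⟨m, hm1, hmb, heq⟩ | ⟨u, hu, heq⟩
  · exfalso
    have h := edir_lE B2 w2 t
    rw [heq, edir_lE] at h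
    simp only [Prod.mk.injEq] at h
    exact hne2 ⟨h.1.symm, h.2.symm⟩
  -- both are off-line edges:  lE B2 w2 t = lE B3 w3 u
  have hμ : ∃ μ : ℤ, B3.1 = B2.1 + μ * w2.1 ∧ B3.2 = B2.2 + μ * w2.2 := by
    rcases sym2_eq.mp heq with ⟨h1, h2⟩ | ⟨h1, h2⟩
    · -- pv B3 w3 u = pv B2 w2 t, pv B3 w3 (u+1) = pv B2 w2 (t+1)
      have c11 := congrArg Prod.fst h1; have c12 := congrArg Prod.snd h1
      have c21 := congrArg Prod.fst h2; have c22 := congrArg Prod.snd h2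
      simp only [pv] at c11 c12 c21 c22
      have hw31 : w3.1 = w2.1 := by linear_combination c21 - c11
      have hw32 : w3.2 = w2.2 := by linear_combination c22 - c12
      exact ⟨t - u, by linear_combination c11 - u * hw31,
        by linear_combination c12 - u * hw32⟩
    · -- pv B3 w3 u = pv B2 w2 (t+1), pv B3 w3 (u+1) = pv B2 w2 t
      have c11 := congrArg Prod.fst h1; have c12 := congrArg Prod.snd h1
      have c21 := congrArg Prod.fst h2; have c22 := congrArg Prod.snd h2
      simp only [pv] at c11 c12 c21 c22
      have hw31 : w3.1 = -w2.1 := by linear_combination c21 - c11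
      have hw32 : w3.2 = -w2.2 := by linear_combination c22 - c12
      exact ⟨t + u + 1, by linear_combination c11 - u * hw31,
        by linear_combination c12 - u * hw32⟩
  obtain ⟨μ, hμ1, hμ2⟩ := hμ
  have hB2' : ∃ s2, (s2 = a2 ∨ s2 = b2) ∧ B2 = pv c d s2 := by
    rcases hB2 with h | h
    exacts [⟨a2, Or.inl rfl, h⟩, ⟨b2, Or.inr rfl, h⟩]
  have hB3' : ∃ s3, (s3 = a3 ∨ s3 = b3) ∧ B3 = pv c d s3 := by
    rcases hB3 with h | h
    exacts [⟨a3, Or.inl rfl, h⟩, ⟨b3, Or.inr rfl, h⟩]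
  obtain ⟨s2, hs2, hs2e⟩ := hB2'
  obtain ⟨s3, hs3, hs3e⟩ := hB3'
  have h2c1 := congrArg Prod.fst hs2e; have h2c2 := congrArg Prod.snd hs2e
  have h3c1 := congrArg Prod.fst hs3e; have h3c2 := congrArg Prod.snd hs3e
  simp only [pv] at h2c1 h2c2 h3c1 h3c2
  have q1 : μ * w2.1 = (s3 - s2) * d.1 := by linear_combination -hμ1 + h3c1 - h2c1
  have q2 : μ * w2.2 = (s3 - s2) * d.2 := by linear_combination -hμ2 + h3c2 - h2c2
  obtain ⟨hμ0, hs0⟩ := np hw2 hd hne2 q1 q2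
  have hBB : B2 = B3 := by
    rw [hs2e, hs3e]
    exact pv_congr _ _ (by omega)
  refine ⟨hBB, s2, by omega, by omega, hs2e⟩

/-- If three pairwise edge-intersecting exactly-one-bend paths are
such that both edge intersections with `P1` lie in one and the same segment of `P1`
and are disjoint, then `P2` and `P3` bend at the same point and the three paths have
a common grid point (they form a claw-clique). -/
theorem stmt11 (P1 P2 P3 : TPath)
    (h1 : bendCount P1.walk = 1) (h2 : bendCount P2.walk = 1) (h3 : bendCount P3.walk = 1)
    (h12 : (pEdges P1 ∩ pEdges P2).Nonempty)
    (h13 : (pEdges P1 ∩ pEdges P3).Nonempty)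
    (h23 : (pEdges P2 ∩ pEdges P3).Nonempty)
    (s : Segment P1)
    (hs2 : pEdges P1 ∩ pEdges P2 ⊆ s.edges)
    (hs3 : pEdges P1 ∩ pEdges P3 ⊆ s.edges)
    (hdisj : (pEdges P1 ∩ pEdges P2) ∩ (pEdges P1 ∩ pEdges P3) = ∅) :
    (∃ b : ℤ × ℤ, IsBendAt P2.walk b ∧ IsBendAt P3.walk b) ∧
    (∃ q : ℤ × ℤ, q ∈ pPts P1 ∧ q ∈ pPts P2 ∧ q ∈ pPts P3) := by
  have hil : s.i < P1.walk.length := by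
    have h := s.lt; have h' := s.le; omega
  have haff0 := straight_affine P1.walk P1.isPath s.i s.j s.le s.straight
  obtain ⟨d, hd'⟩ : ∃ d', d' = ((P1.walk.getVert (s.i+1)).1 - (P1.walk.getVert s.i).1,
      (P1.walk.getVert (s.i+1)).2 - (P1.walk.getVert s.i).2) := ⟨_, rfl⟩
  obtain ⟨c, hc⟩ : ∃ c', c' = P1.walk.getVert s.i := ⟨_, rfl⟩
  rw [← hd', ← hc] at haff0
  have hdStep : Step d.1 d.2 := by
    rw [hd']; exact (adj_iff _ _).mp (P1.walk.adj_getVert_succ hil)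
  have sE : ∀ t : ℕ, s.i ≤ t → t < s.j →
      s(P1.walk.getVert t, P1.walk.getVert (t+1)) = lE c d ((t:ℤ)-(s.i:ℤ)) := by
    intro t ht1 ht2
    rw [haff0 t ht1 (by omega), haff0 (t+1) (by omega) (by omega)]
    exact lE_eq c d rfl (by push_cast; ring)
  have hsub : s.edges ⊆ pEdges P1 := by
    rintro e ⟨t, ht1, ht2, rfl⟩
    have h := s.le
    exact wEdge_mem P1.walk (by omega)
  have schar : ∀ m : ℤ, lE c d m ∈ s.edges ↔ (0 ≤ m ∧ m < (s.j:ℤ)-(s.i:ℤ)) := by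
    intro m
    constructor
    · rintro ⟨t, ht1, ht2, hte⟩
      have h : lE c d m = lE c d ((t:ℤ)-(s.i:ℤ)) := hte.trans (sE t ht1 ht2)
      have := lE_inj hdStep h
      omega
    · rintro ⟨h0, hβ⟩
      refine ⟨s.i + m.toNat, by omega, by omega, ?_⟩
      have h := sE (s.i + m.toNat) (by omega) (by omega)
      rw [show ((s.i + m.toNat : ℕ):ℤ) - (s.i:ℤ) = m by omega] at h
      exact h.symm
  have spts : ∀ m : ℤ, 0 ≤ m → m ≤ (s.j:ℤ)-(s.i:ℤ) → pv c d m ∈ pPts P1 := by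
    intro m h0 hβ
    show pv c d m ∈ P1.walk.support
    rw [SimpleGraph.Walk.mem_support_iff_exists_getVert]
    have hle := s.le
    refine ⟨s.i + m.toNat, ?_, by omega⟩
    have h := haff0 (s.i + m.toNat) (by omega) (by omega)
    rw [show ((s.i + m.toNat : ℕ):ℤ) - (s.i:ℤ) = m by omega] at h
    exact h
  obtain ⟨e12, he12⟩ := h12
  obtain ⟨t2, ht21, ht22, hte2⟩ := hs2 he12
  have hm20 : lE c d ((t2:ℤ)-(s.i:ℤ)) ∈ pEdges P2 := by
    rw [← (hte2.trans (sE t2 ht21 ht22))]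
    exact he12.2
  obtain ⟨e13, he13⟩ := h13
  obtain ⟨t3, ht31, ht32, hte3⟩ := hs3 he13
  have hm30 : lE c d ((t3:ℤ)-(s.i:ℤ)) ∈ pEdges P3 := by
    rw [← (hte3.trans (sE t3 ht31 ht32))]
    exact he13.2
  obtain ⟨a2, b2, B2, w2, h2a, h2b, hchar2, hbend2, hB2, hw2, hwne2, hoff2⟩ :=
    align c d hdStep P2 h2 _ hm20
  obtain ⟨a3, b3, B3, w3, h3a, h3b, hchar3, hbend3, hB3, hw3, hwne3, hoff3⟩ :=
    align c d hdStep P3 h3 _ hm30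
  have hE2 : ∃ m, 0 ≤ m ∧ m < (s.j:ℤ)-(s.i:ℤ) ∧ a2 ≤ m ∧ m < b2 :=
    ⟨(t2:ℤ)-(s.i:ℤ), by omega, by omega, h2a, h2b⟩
  have hE3 : ∃ m, 0 ≤ m ∧ m < (s.j:ℤ)-(s.i:ℤ) ∧ a3 ≤ m ∧ m < b3 :=
    ⟨(t3:ℤ)-(s.i:ℤ), by omega, by omega, h3a, h3b⟩
  have hdisj' : ∀ m : ℤ, ¬(0 ≤ m ∧ m < (s.j:ℤ)-(s.i:ℤ) ∧
      a2 ≤ m ∧ m < b2 ∧ a3 ≤ m ∧ m < b3) := by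
    rintro m ⟨x0, x1, x2, x3, x4, x5⟩
    have hP1 : lE c d m ∈ pEdges P1 := hsub ((schar m).mpr ⟨x0, x1⟩)
    have hP2 : lE c d m ∈ pEdges P2 := (hchar2 m).mpr ⟨x2, x3⟩
    have hP3 : lE c d m ∈ pEdges P3 := (hchar3 m).mpr ⟨x4, x5⟩
    have hmem : lE c d m ∈ (pEdges P1 ∩ pEdges P2) ∩ (pEdges P1 ∩ pEdges P3) :=
      ⟨⟨hP1, hP2⟩, ⟨hP1, hP3⟩⟩
    rw [hdisj] at hmem
    exact hmem
  have horder : b2 ≤ a3 ∨ b3 ≤ a2 := by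
    by_contra hcon
    push_neg at hcon
    obtain ⟨m2', hm2'⟩ := hE2
    obtain ⟨m3', hm3'⟩ := hE3
    set M := max 0 (max a2 a3) with hM
    have l1 : (0:ℤ) ≤ M := le_max_left _ _
    have l2 : a2 ≤ M := le_trans (le_max_left _ _) (le_max_right _ _)
    have l3 : a3 ≤ M := le_trans (le_max_right _ _) (le_max_right _ _)
    have l4 : M = 0 ∨ M = a2 ∨ M = a3 := by
      rcases max_choice (0:ℤ) (max a2 a3) with h | h
      · left; exact h
      · rcases max_choice a2 a3 with h' | h'
        · right; left; rw [hM, h, h']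
        · right; right; rw [hM, h, h']
    exact hdisj' M (by omega)
  rcases horder with ho | ho
  · obtain ⟨hBB, m, hma, hmb, hBm⟩ := endgame c d hdStep ((s.j:ℤ)-(s.i:ℤ))
      P2 P3 a2 b2 a3 b3 B2 B3 w2 w3 hw2 hwne2 hchar3 hB2 hB3 hoff2 hoff3 h23 hE2 hE3 ho
    refine ⟨⟨B2, hbend2, by rw [hBB]; exact hbend3⟩,
      pv c d m, spts m hma hmb, ?_, ?_⟩
    · rw [← hBm]; exact bend_pts hbend2
    · rw [← hBm, hBB]; exact bend_pts hbend3
  · have h23' : (pEdges P3 ∩ pEdges P2).Nonempty := by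
      obtain ⟨e, he⟩ := h23; exact ⟨e, he.2, he.1⟩
    obtain ⟨hBB, m, hma, hmb, hBm⟩ := endgame c d hdStep ((s.j:ℤ)-(s.i:ℤ))
      P3 P2 a3 b3 a2 b2 B3 B2 w3 w2 hw3 hwne3 hchar2 hB3 hB2 hoff3 hoff2 h23' hE3 hE2 ho
    refine ⟨⟨B2, hbend2, by rw [← hBB]; exact hbend3⟩,
      pv c d m, spts m hma hmb, ?_, ?_⟩
    · rw [← hBm, hBB]; exact bend_pts hbend2
    · rw [← hBm]; exact bend_pts hbend3
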